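/- Let L be a finitely generated free ℤ-module of rank n > 1 with basis e₁,…,eₙ, let r be a positive integer and x ∈ L, and let l = gcd(r, x) (the gcd of r and all coordinates of x). Then there exists ξ ∈ L such that (x + r·ξ)/l is a primitive element of L (i.e., l divides x + r·ξ and the quotient element generates a direct summand, equivalently L/(ℤ·((x+r·ξ)/l)) is torsion free). -/

import Mathlib

/-- An element of the free `ℤ`-module `Fin n → ℤ` is *primitive* if the gcd of its
coordinates is `1`; equivalently, the quotient by the subgroup it generates is
torsion free (it generates a direct summand). -/
def IsPrimitiveVec {n : ℕ} (y : Fin n → ℤ) : Prop :=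
  Finset.univ.gcd y = 1

/-- Key lemma: if `gcd (gcd a m) d = 1` and `d ≠ 0`, then there is `t` with
`gcd (a + m*t) d = 1`.  Take `t` to be the product of the primes dividing `d`
but not `a`. -/
lemma key_lemma (a m d : ℤ) (hd : d ≠ 0) (h : Int.gcd (Int.gcd a m : ℤ) d = 1) :
    ∃ t : ℤ, Int.gcd (a + m * t) d = 1 := by
  classical
  set S : Finset ℕ := d.natAbs.primeFactors.filter (fun p : ℕ => ¬ ((p : ℤ) ∣ a)) with hS
  set t : ℤ := ∏ p ∈ S, (p : ℤ) with ht
  refine ⟨t, ?_⟩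
  by_contra hne
  obtain ⟨p, pp, hpg⟩ := Nat.exists_prime_and_dvd hne
  have ppz : Prime (p : ℤ) := Nat.prime_iff_prime_int.mp pp
  have hpd : (p : ℤ) ∣ d :=
    dvd_trans (Int.natCast_dvd_natCast.2 hpg) (Int.gcd_dvd_right _ _)
  have hpy : (p : ℤ) ∣ a + m * t :=
    dvd_trans (Int.natCast_dvd_natCast.2 hpg) (Int.gcd_dvd_left _ _)
  by_cases hpa : (p : ℤ) ∣ a
  · have hpmt : (p : ℤ) ∣ m * t := (dvd_add_right hpa).1 hpy
    rcases ppz.dvd_mul.1 hpmt with hpm | hpt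
    · have h1 : (p : ℤ) ∣ (Int.gcd a m : ℤ) := Int.dvd_coe_gcd hpa hpm
      have h2 : (p : ℤ) ∣ (Int.gcd (Int.gcd a m : ℤ) d : ℤ) := Int.dvd_coe_gcd h1 hpd
      rw [h] at h2
      exact ppz.not_dvd_one (by exact_mod_cast h2)
    · obtain ⟨q, hq, hpq⟩ := ppz.exists_mem_finset_dvd hpt
      rw [hS, Finset.mem_filter] at hq
      have hq' : q.Prime := (Nat.mem_primeFactors.1 hq.1).1
      have : p = q := (Nat.prime_dvd_prime_iff_eq pp hq').1 (Int.natCast_dvd_natCast.1 hpq)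
      exact hq.2 (this ▸ hpa)
  · have hpmem : p ∈ S := by
      rw [hS, Finset.mem_filter, Nat.mem_primeFactors]
      exact ⟨⟨pp, Int.natCast_dvd_natCast.1 (by rwa [Int.dvd_natAbs]),
        Int.natAbs_ne_zero.2 hd⟩, hpa⟩
    have hpt : (p : ℤ) ∣ t := Finset.dvd_prod_of_mem _ hpmem
    have : (p : ℤ) ∣ a := by
      have h2 := dvd_sub hpy (hpt.mul_left m)
      simpa using h2
    exact hpa this

/-- If the gcd of all coordinates of `y` divides two coprime integers, it is `1`. -/
lemma gcd_univ_eq_one {n : ℕ} (y : Fin n → ℤ) (a b : ℤ)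
    (ha : Finset.univ.gcd y ∣ a) (hb : Finset.univ.gcd y ∣ b)
    (h : Int.gcd a b = 1) : Finset.univ.gcd y = 1 := by
  have h1 : Finset.univ.gcd y ∣ 1 := by
    have := dvd_gcd ha hb
    rwa [← Int.coe_gcd, h, Int.ofNat_one] at this
  have h2 : 0 ≤ Finset.univ.gcd y := by
    rcases le_or_gt 0 (Finset.univ.gcd y) with h | h
    · exact h
    · have := Finset.normalize_gcd (s := (Finset.univ : Finset (Fin n))) (f := y)
      rw [Int.normalize_of_nonpos h.le] at this
      omega
  exact Int.eq_one_of_dvd_one h2 h1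

/-- Let `L` be a finitely generated free `ℤ`-module of rank `n > 1`, `r` a positive
integer, `x ∈ L` and `l = gcd(r, x)`.  Then there exists `ξ ∈ L` such that
`(x + r·ξ)/l` is a primitive element of `L`. -/
theorem stmt0 {n : ℕ} (hn : 1 < n) (r : ℤ) (hr : 0 < r) (x : Fin n → ℤ)
    (l : ℤ) (hl : l = gcd r (Finset.univ.gcd x)) :
    ∃ ξ y : Fin n → ℤ, (∀ i, x i + r * ξ i = l * y i) ∧ IsPrimitiveVec y := by
  classical
  have hl0 : l ≠ 0 := by
    rw [hl]; intro h0
    rw [gcd_eq_zero_iff] at h0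
    exact hr.ne' h0.1
  have hlnn : 0 ≤ l := by
    rw [hl, ← Int.coe_gcd]; exact Int.natCast_nonneg _
  have hnorm : normalize l = l := Int.normalize_of_nonneg hlnn
  have hlr : l ∣ r := hl ▸ gcd_dvd_left _ _
  have hlx : ∀ i, l ∣ x i := fun i =>
    dvd_trans (hl ▸ gcd_dvd_right _ _) (Finset.gcd_dvd (Finset.mem_univ i))
  set r' : ℤ := r / l with hr'def
  set x' : Fin n → ℤ := fun i => x i / l with hx'def
  have hrr : r = l * r' := (Int.mul_ediv_cancel' hlr).symm
  have hxx : ∀ i, x i = l * x' i := fun i => (Int.mul_ediv_cancel' (hlx i)).symm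
  have claimA : GCDMonoid.gcd (Finset.univ.gcd x') r' = 1 := by
    have h1 : l * GCDMonoid.gcd (Finset.univ.gcd x') r' = l * 1 := by
      calc l * GCDMonoid.gcd (Finset.univ.gcd x') r'
          = GCDMonoid.gcd (l * Finset.univ.gcd x') (l * r') := by
            rw [gcd_mul_left, hnorm]
        _ = GCDMonoid.gcd (Finset.univ.gcd x) r := by
            rw [← hrr]
            congr 1
            rw [show Finset.univ.gcd x = Finset.univ.gcd (fun i => l * x' i) from
              Finset.gcd_congr rfl (fun i _ => hxx i), Finset.gcd_mul_left, hnorm]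
        _ = l * 1 := by rw [gcd_comm, ← hl, mul_one]
    exact mul_left_cancel₀ hl0 h1
  set i0 : Fin n := ⟨0, by omega⟩ with hi0
  set i1 : Fin n := ⟨1, hn⟩ with hi1
  have hne01 : i0 ≠ i1 := by
    simp [hi0, hi1, Fin.ext_iff]
  set d : ℤ := (Finset.univ.erase i0).gcd x' with hd
  have hsplit : Finset.univ.gcd x' = GCDMonoid.gcd (x' i0) d := by
    conv_lhs => rw [← Finset.insert_erase (Finset.mem_univ i0)]
    rw [Finset.gcd_insert]
  by_cases hd0 : d = 0
  · -- all other coordinates vanish; use ξ = e₁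
    have hzero : ∀ j ∈ Finset.univ.erase i0, x' j = 0 := Finset.gcd_eq_zero_iff.1 hd0
    have hx1 : x' i1 = 0 := hzero i1 (Finset.mem_erase.2 ⟨hne01.symm, Finset.mem_univ _⟩)
    refine ⟨fun i => if i = i1 then 1 else 0,
      fun i => x' i + r' * (if i = i1 then 1 else 0), fun i => ?_, ?_⟩
    · rw [hxx i, hrr]; ring
    · have hAB : Int.gcd (x' i0) r' = 1 := by
        have hdvd : (Int.gcd (x' i0) r' : ℤ) ∣ GCDMonoid.gcd (Finset.univ.gcd x') r' := by
          apply dvd_gcd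
          · apply Finset.dvd_gcd
            intro j hj
            by_cases hji : j = i0
            · subst hji; exact Int.gcd_dvd_left _ _
            · rw [hzero j (Finset.mem_erase.2 ⟨hji, Finset.mem_univ _⟩)]
              exact dvd_zero _
          · exact Int.gcd_dvd_right _ _
        rw [claimA] at hdvd
        exact Nat.eq_one_of_dvd_one (by exact_mod_cast hdvd)
      show Finset.univ.gcd _ = 1
      apply gcd_univ_eq_one _ (x' i0) r' ?_ ?_ hAB
      · have := Finset.gcd_dvd (s := Finset.univ)
          (f := fun i => x' i + r' * (if i = i1 then 1 else 0)) (Finset.mem_univ i0)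
        simpa [hne01] using this
      · have := Finset.gcd_dvd (s := Finset.univ)
          (f := fun i => x' i + r' * (if i = i1 then 1 else 0)) (Finset.mem_univ i1)
        simpa [hx1] using this
  · -- general case: adjust coordinate 0
    have hkey : Int.gcd (Int.gcd (x' i0) r' : ℤ) d = 1 := by
      have h2 : GCDMonoid.gcd (GCDMonoid.gcd (x' i0) r') d = 1 := by
        rw [gcd_assoc, gcd_comm r' d, ← gcd_assoc, ← hsplit]; exact claimA
      have h3 : GCDMonoid.gcd ((Int.gcd (x' i0) r' : ℤ)) d = 1 := by
        rw [Int.coe_gcd]; exact h2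
      rw [← Int.coe_gcd] at h3
      exact_mod_cast h3
    obtain ⟨t, htt⟩ := key_lemma (x' i0) r' d hd0 hkey
    refine ⟨fun i => if i = i0 then t else 0,
      fun i => x' i + r' * (if i = i0 then t else 0), fun i => ?_, ?_⟩
    · rw [hxx i, hrr]; ring
    · show Finset.univ.gcd _ = 1
      apply gcd_univ_eq_one _ (x' i0 + r' * t) d ?_ ?_ htt
      · have := Finset.gcd_dvd (s := Finset.univ)
          (f := fun i => x' i + r' * (if i = i0 then t else 0)) (Finset.mem_univ i0)
        simpa using this
      · rw [hd]
        apply Finset.dvd_gcd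
        intro j hj
        have hji : j ≠ i0 := (Finset.mem_erase.1 hj).1
        have := Finset.gcd_dvd (s := Finset.univ)
          (f := fun i => x' i + r' * (if i = i0 then t else 0)) (Finset.mem_univ j)
        simpa [hji] using this
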